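/- Termination of the reluctant per-origin update rule: let D be a bounded lattice with a strong widening operator ∇ and a narrowing operator △, let L and G be finite sets of locals and globals respectively, and fix a gas bound N ∈ ℕ. Maintain a state cmap : G → L → D × {W, N} × ℕ, initially (⊥, W, 0) everywhere. A call with origin x ∈ L, contributions C ⊆ G × D (each global at most once), and current map ρ : G → D processes each (g,b) ∈ C as follows, where (a, p, n) = cmap g x: if a = b, do nothing for g; otherwise, if b ⋢ a, set cmap g x = ((if b ⊑ ρ g then a ⊔ b else a ∇ b), W, n); otherwise, if p = N, set cmap g x = (a △ b, N, n); otherwise, if n ≥ N, do nothing for g; otherwise set cmap g x = (a △ b, N, n+1); in the first three mutating cases, letting d be the join over l ∈ L of the first components of cmap g l (after the update), emit the update (g,d) if d ≠ ρ g. Then for every infinite sequence of calls (xᵢ, Cᵢ), i ≥ 0, with ρᵢ₊₁ = ρᵢ ⊕ Uᵢ where Uᵢ is the set of updates emitted at call i, there exists j such that Uᵢ = ∅ for all i > j; i.e., the number of updates to globals is finite. -/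

import Mathlib

attribute [local instance] Classical.propDecidable

/-- A sequence is ultimately stable. -/
def UltimatelyStable {D : Type*} (a : ℕ → D) : Prop :=
  ∃ i₀, ∀ i, i₀ ≤ i → a i = a i₀

/-- `W` is a strong widening operator: (i) it subsumes the join, (ii) `a ∇ b = a` whenever
`b ≤ a`, and (iii) for every increasing sequence `a₁ ≤ a₂ ≤ …` and every sequence `bᵢ`
with `aᵢ ∇ bᵢ ≤ a_{i+1}` for all `i ≥ 1`, eventually `bᵢ ≤ aᵢ`. -/
def IsStrongWidening {D : Type*} [Lattice D] (W : D → D → D) : Prop :=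
  (∀ a b, a ⊔ b ≤ W a b) ∧
  (∀ a b, b ≤ a → W a b = a) ∧
  ∀ (a b : ℕ → D), (∀ i, 1 ≤ i → a i ≤ a (i + 1)) →
    (∀ i, 1 ≤ i → W (a i) (b i) ≤ a (i + 1)) →
    ∃ i₀, 1 ≤ i₀ ∧ ∀ i, i₀ ≤ i → b i ≤ a i

/-- `N` is a narrowing operator: `a ⊓ b ≤ N a b ≤ a`, and every narrowing sequence
`aᵢ = a_{i-1} △ bᵢ` is ultimately stable. -/
def IsNarrowing {D : Type*} [Lattice D] (N : D → D → D) : Prop :=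
  (∀ a b, a ⊓ b ≤ N a b ∧ N a b ≤ a) ∧
  ∀ (a b : ℕ → D), (∀ i, a (i + 1) = N (a i) (b (i + 1))) → UltimatelyStable a

/-- The widening (`W`) / narrowing (`N`) phase recorded per pair of a global and a local. -/
inductive Phase : Type where
  | W : Phase
  | N : Phase

/-- Processing of a single contribution `b` to a global with current value `ρg`, where
`e = (a, p, n)` is the recorded entry (value, phase, consumed W/N gas) of the contributing
local for this global, with gas bound `gas`:
* if `a = b`, do nothing;
* otherwise, if `b ⋢ a`, record `(if b ⊑ ρ g then a ⊔ b else a ∇ b, W, n)` (reluctant widening);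
* otherwise, if the phase is `N`, record `(a △ b, N, n)`;
* otherwise, if `n ≥ gas`, do nothing (gas exhausted);
* otherwise record `(a △ b, N, n + 1)` (switch phase, consume gas). -/
noncomputable def procOne {D : Type*} [Lattice D] (Wop Nop : D → D → D) (gas : ℕ)
    (ρg : D) (e : D × Phase × ℕ) (b : D) : D × Phase × ℕ :=
  if e.1 = b then e
  else if ¬ b ≤ e.1 then
    ((if b ≤ ρg then e.1 ⊔ b else Wop e.1 b), Phase.W, e.2.2)
  else if e.2.1 = Phase.N then (Nop e.1 b, Phase.N, e.2.2)
  else if gas ≤ e.2.2 then e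
  else (Nop e.1 b, Phase.N, e.2.2 + 1)

/-- The entry of `(g, x)` is mutated by contribution `b` (the first three mutating cases). -/
def Mutates {D : Type*} [Lattice D] (gas : ℕ) (e : D × Phase × ℕ) (b : D) : Prop :=
  e.1 ≠ b ∧ (¬ b ≤ e.1 ∨ e.2.1 = Phase.N ∨ e.2.2 < gas)

/-- The new `cmap` after a call with origin `x` and contributions `Cs` (at most one
contribution per global, encoded as `Cs : G → Option D`). -/
noncomputable def stepCmap {D L G : Type*} [Lattice D] (Wop Nop : D → D → D) (gas : ℕ)
    (ρ : G → D) (x : L) (Cs : G → Option D)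
    (cm : G → L → D × Phase × ℕ) : G → L → D × Phase × ℕ :=
  fun g l =>
    match Cs g with
    | none => cm g l
    | some b => if l = x then procOne Wop Nop gas (ρ g) (cm g l) b else cm g l

/-- The updates emitted by a call: for each contribution `(g, b)` whose processing mutates
the entry of `(g, x)`, letting `d` be the join over `l ∈ L` of the first components of the
updated `cmap g l`, the update `(g, d)` is emitted provided `d ≠ ρ g`. -/
noncomputable def emitted {D L G : Type*} [Lattice D] [OrderBot D] [Fintype L]
    (Wop Nop : D → D → D) (gas : ℕ) (ρ : G → D) (x : L) (Cs : G → Option D)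
    (cm : G → L → D × Phase × ℕ) : G → Option D :=
  fun g =>
    match Cs g with
    | none => none
    | some b =>
      if Mutates gas (cm g x) b then
        let d := Finset.univ.sup fun l => (stepCmap Wop Nop gas ρ x Cs cm g l).1
        if d ≠ ρ g then some d else none
      else none

/-- The run of the update rule on a sequence of calls `(x i, Cs i)`, starting from the
everywhere-`(⊥, W, 0)` `cmap` and an initial `ρ₀`; at each call, `ρ` is updated by the
emitted updates (`ρ_{i+1} = ρ_i ⊕ U_i`). -/
noncomputable def runState {D L G : Type*} [Lattice D] [OrderBot D] [Fintype L]
    (Wop Nop : D → D → D) (gas : ℕ) (x : ℕ → L) (Cs : ℕ → G → Option D) (ρ0 : G → D) :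
    ℕ → (G → L → D × Phase × ℕ) × (G → D)
  | 0 => (fun _ _ => (⊥, Phase.W, 0), ρ0)
  | i + 1 =>
    let s := runState Wop Nop gas x Cs ρ0 i
    (stepCmap Wop Nop gas s.2 (x i) (Cs i) s.1,
     fun g => (emitted Wop Nop gas s.2 (x i) (Cs i) s.1 g).getD (s.2 g))

/-! ### Auxiliary lemmas -/

lemma aux_nat_mono_bdd_stable (B : ℕ) (f : ℕ → ℕ) (hm : ∀ i, f i ≤ f (i + 1))
    (hb : ∀ i, f i ≤ B) : ∃ i₀, ∀ i, i₀ ≤ i → f i = f i₀ := by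
  have hmono : Monotone f := monotone_nat_of_le_succ hm
  by_contra h
  push_neg at h
  have key : ∀ k, ∃ i, k ≤ f i := by
    intro k
    induction k with
    | zero => exact ⟨0, Nat.zero_le _⟩
    | succ k ih =>
      obtain ⟨i, hi⟩ := ih
      obtain ⟨i', hi', hne⟩ := h i
      have : f i < f i' := lt_of_le_of_ne (hmono hi') (Ne.symm hne)
      exact ⟨i', by omega⟩
  obtain ⟨i, hi⟩ := key (B + 1)
  have := hb i
  omega

lemma aux_phase_cases (p : Phase) : p = Phase.W ∨ p = Phase.N := by
  cases p <;> simp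

lemma aux_procOne_of_not_mutates {D : Type*} [Lattice D] (Wop Nop : D → D → D) (gas : ℕ)
    (r : D) (e : D × Phase × ℕ) (b : D) (h : ¬ Mutates gas e b) :
    procOne Wop Nop gas r e b = e := by
  unfold Mutates at h
  push_neg at h
  rcases Classical.em (e.1 = b) with h1 | h1
  · simp [procOne, h1]
  · obtain ⟨hb, hp, hg⟩ := h h1
    simp [procOne, h1, hb, hp, hg]

lemma aux_procOne_cases {D : Type*} [Lattice D] (Wop Nop : D → D → D) (gas : ℕ)
    (r : D) (e : D × Phase × ℕ) (b : D) :
    procOne Wop Nop gas r e b = e ∨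
    (¬ b ≤ e.1 ∧ b ≤ r ∧ procOne Wop Nop gas r e b = (e.1 ⊔ b, Phase.W, e.2.2)) ∨
    (¬ b ≤ e.1 ∧ ¬ b ≤ r ∧ procOne Wop Nop gas r e b = (Wop e.1 b, Phase.W, e.2.2)) ∨
    (b ≤ e.1 ∧ e.2.1 = Phase.N ∧ procOne Wop Nop gas r e b = (Nop e.1 b, Phase.N, e.2.2)) ∨
    (b ≤ e.1 ∧ e.2.1 = Phase.W ∧ e.2.2 < gas ∧
      procOne Wop Nop gas r e b = (Nop e.1 b, Phase.N, e.2.2 + 1)) := by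
  rcases Classical.em (e.1 = b) with h1 | h1
  · exact Or.inl (by simp [procOne, h1])
  rcases Classical.em (b ≤ e.1) with h2 | h2
  · rcases aux_phase_cases e.2.1 with hp | hp
    · rcases Classical.em (gas ≤ e.2.2) with h4 | h4
      · exact Or.inl (by simp [procOne, h1, h2, hp, h4])
      · refine Or.inr (Or.inr (Or.inr (Or.inr ⟨h2, hp, by omega, ?_⟩)))
        simp [procOne, h1, h2, hp, h4]
    · exact Or.inr (Or.inr (Or.inr (Or.inl ⟨h2, hp, by simp [procOne, h1, h2, hp]⟩)))
  · rcases Classical.em (b ≤ r) with h3 | h3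
    · exact Or.inr (Or.inl ⟨h2, h3, by simp [procOne, h1, h2, h3]⟩)
    · exact Or.inr (Or.inr (Or.inl ⟨h2, h3, by simp [procOne, h1, h2, h3]⟩))

/-- Termination of the reluctant per-origin update rule: if `D` is a
bounded lattice with a strong widening operator `Wop` and a narrowing operator `Nop`, `L`
and `G` are finite, and `gas` is any gas bound, then for every infinite sequence of calls
`(x i, Cs i)` the set of emitted updates is eventually empty: there is `j` such that for
all `i > j` no update is emitted at call `i`. -/
theorem reluctant_update_rule_terminates
    {D L G : Type*} [Lattice D] [BoundedOrder D] [Fintype L] [Fintype G]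
    (Wop Nop : D → D → D)
    (hW : IsStrongWidening Wop) (hN : IsNarrowing Nop)
    (gas : ℕ) (x : ℕ → L) (Cs : ℕ → G → Option D) (ρ0 : G → D) :
    ∃ j, ∀ i, j < i → ∀ g,
      emitted Wop Nop gas ((runState Wop Nop gas x Cs ρ0 i).2) (x i) (Cs i)
        ((runState Wop Nop gas x Cs ρ0 i).1) g = none := by
  obtain ⟨hW1, hW2, hW3⟩ := hW
  obtain ⟨hN1, hN2⟩ := hN
  have hNid : ∀ a : D, Nop a a = a := fun a =>
    le_antisymm (hN1 a a).2 (by simpa using (hN1 a a).1)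
  set R := runState Wop Nop gas x Cs ρ0 with hR
  have hRsucc : ∀ i, R (i + 1) =
      (stepCmap Wop Nop gas (R i).2 (x i) (Cs i) (R i).1,
       fun g => (emitted Wop Nop gas (R i).2 (x i) (Cs i) (R i).1 g).getD ((R i).2 g)) := by
    intro i
    rw [hR]
    rfl
  -- basic recurrences
  have cm_none : ∀ i g l, Cs i g = none → (R (i+1)).1 g l = (R i).1 g l := by
    intro i g l h
    rw [hRsucc i]
    simp [stepCmap, h]
  have cm_some : ∀ i g l b, Cs i g = some b → (R (i+1)).1 g l =
      (if l = x i then procOne Wop Nop gas ((R i).2 g) ((R i).1 g l) b else (R i).1 g l) := by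
    intro i g l b h
    rw [hRsucc i]
    simp [stepCmap, h]
  have rho_succ : ∀ i g, (R (i+1)).2 g =
      (emitted Wop Nop gas (R i).2 (x i) (Cs i) (R i).1 g).getD ((R i).2 g) := by
    intro i g
    rw [hRsucc i]
  have em_cs_none : ∀ i g, Cs i g = none →
      emitted Wop Nop gas (R i).2 (x i) (Cs i) (R i).1 g = none := by
    intro i g h
    simp [emitted, h]
  have em_not_mut : ∀ i g b, Cs i g = some b → ¬ Mutates gas ((R i).1 g (x i)) b →
      emitted Wop Nop gas (R i).2 (x i) (Cs i) (R i).1 g = none := by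
    intro i g b h hm
    simp [emitted, h, hm]
  have em_mut : ∀ i g b, Cs i g = some b → Mutates gas ((R i).1 g (x i)) b →
      emitted Wop Nop gas (R i).2 (x i) (Cs i) (R i).1 g =
        if (Finset.univ.sup fun l => ((R (i+1)).1 g l).1) ≠ (R i).2 g
          then some (Finset.univ.sup fun l => ((R (i+1)).1 g l).1) else none := by
    intro i g b h hm
    have hst : stepCmap Wop Nop gas (R i).2 (x i) (Cs i) (R i).1 = (R (i+1)).1 := by
      rw [hRsucc i]
    simp only [emitted, h, if_pos hm, hst]
  have rho_keep : ∀ i g, emitted Wop Nop gas (R i).2 (x i) (Cs i) (R i).1 g = none →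
      (R (i+1)).2 g = (R i).2 g := by
    intro i g h
    rw [rho_succ i g, h, Option.getD_none]
  have rho_mut : ∀ i g b, Cs i g = some b → Mutates gas ((R i).1 g (x i)) b →
      (R (i+1)).2 g = Finset.univ.sup fun l => ((R (i+1)).1 g l).1 := by
    intro i g b h hm
    rw [rho_succ i g, em_mut i g b h hm]
    by_cases hd : (Finset.univ.sup fun l => ((R (i+1)).1 g l).1) = (R i).2 g
    · rw [if_neg (by simp [hd]), Option.getD_none]
      exact hd.symm
    · rw [if_pos hd, Option.getD_some]
  have em_some_inv : ∀ i g d,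
      emitted Wop Nop gas (R i).2 (x i) (Cs i) (R i).1 g = some d →
      (∃ b, Cs i g = some b ∧ Mutates gas ((R i).1 g (x i)) b) ∧
      d = (Finset.univ.sup fun l => ((R (i+1)).1 g l).1) ∧ d ≠ (R i).2 g := by
    intro i g d hd
    cases hC : Cs i g with
    | none => rw [em_cs_none i g hC] at hd; exact absurd hd (by simp)
    | some b =>
      by_cases hm : Mutates gas ((R i).1 g (x i)) b
      · rw [em_mut i g b hC hm] at hd
        by_cases hne : (Finset.univ.sup fun l => ((R (i+1)).1 g l).1) = (R i).2 g
        · rw [if_neg (by simp [hne])] at hd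
          exact absurd hd (by simp)
        · rw [if_pos hne] at hd
          injection hd with hd
          refine ⟨⟨b, rfl, hm⟩, hd.symm, ?_⟩
          rw [← hd]
          exact hne
      · rw [em_not_mut i g b hC hm] at hd
        exact absurd hd (by simp)
  have step_cases : ∀ i g l, (R (i+1)).1 g l = (R i).1 g l ∨
      ∃ b, Cs i g = some b ∧ l = x i ∧
        (R (i+1)).1 g l = procOne Wop Nop gas ((R i).2 g) ((R i).1 g l) b := by
    intro i g l
    cases hC : Cs i g with
    | none => exact Or.inl (cm_none i g l hC)
    | some b =>
      by_cases hl : l = x i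
      · exact Or.inr ⟨b, rfl, hl, by rw [cm_some i g l b hC, if_pos hl]⟩
      · exact Or.inl (by rw [cm_some i g l b hC, if_neg hl])
  -- the invariant: all recorded values are below ρ
  have inv : ∀ i g l, ((R i).1 g l).1 ≤ (R i).2 g := by
    intro i
    induction i with
    | zero =>
      intro g l
      have h0 : R 0 = (fun _ _ => ((⊥ : D), Phase.W, 0), ρ0) := by rw [hR]; rfl
      rw [h0]
      exact bot_le
    | succ i ih =>
      intro g l
      cases hC : Cs i g with
      | none =>
        rw [cm_none i g l hC, rho_keep i g (em_cs_none i g hC)]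
        exact ih g l
      | some b =>
        by_cases hm : Mutates gas ((R i).1 g (x i)) b
        · rw [rho_mut i g b hC hm]
          exact Finset.le_sup (f := fun l => ((R (i+1)).1 g l).1) (Finset.mem_univ l)
        · have hcm : (R (i+1)).1 g l = (R i).1 g l := by
            rw [cm_some i g l b hC]
            by_cases hl : l = x i
            · rw [if_pos hl, hl, aux_procOne_of_not_mutates Wop Nop gas _ _ _ hm]
            · rw [if_neg hl]
          rw [hcm, rho_keep i g (em_not_mut i g b hC hm)]
          exact ih g l
  -- KEY: per-pair eventual goodness
  have key : ∀ g l, ∃ T, ∀ i, T ≤ i →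
      ((R i).1 g l).1 ≤ ((R (i+1)).1 g l).1 ∧ ((R (i+1)).1 g l).1 ≤ (R i).2 g := by
    intro g l
    have hn_step : ∀ i,
        ((R i).1 g l).2.2 ≤ ((R (i+1)).1 g l).2.2 ∧
        (((R i).1 g l).2.2 ≤ gas → ((R (i+1)).1 g l).2.2 ≤ gas) ∧
        (((R i).1 g l).2.1 = Phase.W → ((R (i+1)).1 g l).2.1 = Phase.N →
          ((R i).1 g l).2.2 < ((R (i+1)).1 g l).2.2) := by
      intro i
      rcases step_cases i g l with hstep | ⟨b, hC, hl, hstep⟩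
      · rw [hstep]
        exact ⟨le_refl _, fun h => h, fun h1 h2 => absurd (h1.symm.trans h2) (by simp)⟩
      · rcases aux_procOne_cases Wop Nop gas ((R i).2 g) ((R i).1 g l) b with
            h | ⟨hb, hr, h⟩ | ⟨hb, hr, h⟩ | ⟨hb, hp, h⟩ | ⟨hb, hp, hg, h⟩
        · rw [hstep, h]
          exact ⟨le_refl _, fun h => h, fun h1 h2 => absurd (h1.symm.trans h2) (by simp)⟩
        · rw [hstep, h]
          exact ⟨le_refl _, fun h => h, fun _ h2 => absurd h2 (by simp)⟩
        · rw [hstep, h]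
          exact ⟨le_refl _, fun h => h, fun _ h2 => absurd h2 (by simp)⟩
        · rw [hstep, h]
          exact ⟨le_refl _, fun h => h, fun h1 _ => absurd (hp.symm.trans h1) (by simp)⟩
        · rw [hstep, h]
          exact ⟨Nat.le_succ _, fun _ => hg, fun _ _ => Nat.lt_succ_self _⟩
    have hn_bdd : ∀ i, ((R i).1 g l).2.2 ≤ gas := by
      intro i
      induction i with
      | zero =>
        have h0 : R 0 = (fun _ _ => ((⊥ : D), Phase.W, 0), ρ0) := by rw [hR]; rfl
        rw [h0]
        exact Nat.zero_le gas
      | succ i ih => exact (hn_step i).2.1 ih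
    obtain ⟨T0, hT0⟩ := aux_nat_mono_bdd_stable gas (fun i => ((R i).1 g l).2.2)
      (fun i => (hn_step i).1) hn_bdd
    have hWper : ∀ i, T0 ≤ i → ((R i).1 g l).2.1 = Phase.W →
        ((R (i+1)).1 g l).2.1 = Phase.W := by
      intro i hi hp
      rcases aux_phase_cases ((R (i+1)).1 g l).2.1 with h | h
      · exact h
      · exfalso
        have hlt := (hn_step i).2.2 hp h
        have e1 := hT0 i hi
        have e2 := hT0 (i+1) (by omega)
        omega
    have hph : ∃ T1, T0 ≤ T1 ∧ ((∀ i, T1 ≤ i → ((R i).1 g l).2.1 = Phase.N) ∨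
        (∀ i, T1 ≤ i → ((R i).1 g l).2.1 = Phase.W)) := by
      rcases Classical.em (∃ i, T0 ≤ i ∧ ((R i).1 g l).2.1 = Phase.W) with ⟨i1, hi1, hw⟩ | hno
      · refine ⟨i1, hi1, Or.inr ?_⟩
        have hall : ∀ k, ((R (i1 + k)).1 g l).2.1 = Phase.W := by
          intro k
          induction k with
          | zero => simpa using hw
          | succ k ih => exact hWper (i1 + k) (by omega) ih
        intro i hi
        have := hall (i - i1)
        rwa [show i1 + (i - i1) = i by omega] at this
      · refine ⟨T0, le_refl _, Or.inl ?_⟩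
        intro i hi
        rcases aux_phase_cases ((R i).1 g l).2.1 with h | h
        · exact absurd ⟨i, hi, h⟩ hno
        · exact h
    obtain ⟨T1, hT01, hNcase | hWcase⟩ := hph
    · -- narrowing tail: values eventually constant
      have hstepN : ∀ k, ∃ b, ((R (T1 + k + 1)).1 g l).1 = Nop ((R (T1 + k)).1 g l).1 b := by
        intro k
        rcases step_cases (T1 + k) g l with hstep | ⟨b, hC, hl, hstep⟩
        · exact ⟨((R (T1 + k)).1 g l).1, by rw [hNid, hstep]⟩
        · rcases aux_procOne_cases Wop Nop gas ((R (T1 + k)).2 g) ((R (T1 + k)).1 g l) b with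
              h | ⟨hb, hr, h⟩ | ⟨hb, hr, h⟩ | ⟨hb, hp, h⟩ | ⟨hb, hp, hg, h⟩
          · exact ⟨((R (T1 + k)).1 g l).1, by rw [hNid, hstep, h]⟩
          · exfalso
            have hph2 := hNcase (T1 + k + 1) (by omega)
            rw [hstep, h] at hph2
            simp at hph2
          · exfalso
            have hph2 := hNcase (T1 + k + 1) (by omega)
            rw [hstep, h] at hph2
            simp at hph2
          · exact ⟨b, by rw [hstep, h]⟩
          · exfalso
            rw [hNcase (T1 + k) (by omega)] at hp
            simp at hp
      choose Bn hBn using hstepN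
      have hus : UltimatelyStable (fun k => ((R (T1 + k)).1 g l).1) := by
        apply hN2 (fun k => ((R (T1 + k)).1 g l).1) (fun k => Bn (k - 1))
        intro k
        simpa [Nat.add_assoc] using hBn k
      obtain ⟨k₀, hk₀⟩ := hus
      refine ⟨T1 + k₀, ?_⟩
      intro i hi
      have h1 := hk₀ (i - T1) (by omega)
      have h2 := hk₀ (i + 1 - T1) (by omega)
      simp only at h1 h2
      rw [show T1 + (i - T1) = i by omega] at h1
      rw [show T1 + (i + 1 - T1) = i + 1 by omega] at h2
      have hval : ((R i).1 g l).1 = ((R (i+1)).1 g l).1 := by rw [h1, h2]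
      constructor
      · exact le_of_eq hval
      · rw [← hval]
        exact inv i g l
    · -- widening tail
      have hstepW : ∀ i, T1 ≤ i → (R (i+1)).1 g l = (R i).1 g l ∨
          ∃ b, Cs i g = some b ∧ l = x i ∧ ¬ b ≤ ((R i).1 g l).1 ∧
            ((b ≤ (R i).2 g ∧ ((R (i+1)).1 g l).1 = ((R i).1 g l).1 ⊔ b) ∨
             (¬ b ≤ (R i).2 g ∧ ((R (i+1)).1 g l).1 = Wop ((R i).1 g l).1 b)) := by
        intro i hi
        rcases step_cases i g l with hstep | ⟨b, hC, hl, hstep⟩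
        · exact Or.inl hstep
        · rcases aux_procOne_cases Wop Nop gas ((R i).2 g) ((R i).1 g l) b with
              h | ⟨hb, hr, h⟩ | ⟨hb, hr, h⟩ | ⟨hb, hp, h⟩ | ⟨hb, hp, hg, h⟩
          · exact Or.inl (hstep.trans h)
          · exact Or.inr ⟨b, hC, hl, hb, Or.inl ⟨hr, by rw [hstep, h]⟩⟩
          · exact Or.inr ⟨b, hC, hl, hb, Or.inr ⟨hr, by rw [hstep, h]⟩⟩
          · exfalso
            rw [hWcase i hi] at hp
            simp at hp
          · exfalso
            have hph2 := hWcase (i+1) (by omega)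
            rw [hstep, h] at hph2
            simp at hph2
      have vstep : ∀ i, T1 ≤ i → ((R i).1 g l).1 ≤ ((R (i+1)).1 g l).1 := by
        intro i hi
        rcases hstepW i hi with h | ⟨b, _, _, _, ⟨_, h⟩ | ⟨_, h⟩⟩
        · rw [h]
        · rw [h]
          exact le_sup_left
        · rw [h]
          exact le_sup_left.trans (hW1 _ _)
      have vmono : ∀ i i', T1 ≤ i → i ≤ i' → ((R i).1 g l).1 ≤ ((R i').1 g l).1 := by
        intro i i' hT hii'
        induction i' with
        | zero =>
          obtain rfl : i = 0 := by omega
          exact le_refl _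
        | succ i' ih =>
          rcases Nat.eq_or_lt_of_le hii' with heq | hlt
          · rw [heq]
          · exact (ih (by omega)).trans (vstep i' (by omega))
      rcases Classical.em (∀ m, ∃ i, m ≤ i ∧ ∃ b, Cs i g = some b ∧ l = x i ∧
          ¬ b ≤ ((R i).1 g l).1 ∧ ¬ b ≤ (R i).2 g ∧
          ((R (i+1)).1 g l).1 = Wop ((R i).1 g l).1 b) with hbad | hfin
      · -- infinitely many true widening steps: contradiction with strong widening
        exfalso
        choose nxt hnxt1 hnxt2 using hbad
        let f : ℕ → ℕ := fun k => Nat.rec (nxt T1) (fun _ prev => nxt (prev + 1)) k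
        have hf0 : f 0 = nxt T1 := rfl
        have hfs : ∀ k, f (k+1) = nxt (f k + 1) := fun k => rfl
        have hfbad : ∀ k, ∃ b, Cs (f k) g = some b ∧ l = x (f k) ∧
            ¬ b ≤ ((R (f k)).1 g l).1 ∧ ¬ b ≤ (R (f k)).2 g ∧
            ((R (f k + 1)).1 g l).1 = Wop ((R (f k)).1 g l).1 b := by
          intro k
          cases k with
          | zero => rw [hf0]; exact hnxt2 T1
          | succ k => rw [hfs]; exact hnxt2 (f k + 1)
        have hfT1 : ∀ k, T1 ≤ f k := by
          intro k
          induction k with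
          | zero => rw [hf0]; exact hnxt1 T1
          | succ k ih =>
            rw [hfs]
            have := hnxt1 (f k + 1)
            omega
        have hfmono : ∀ k, f k < f (k+1) := by
          intro k
          rw [hfs]
          have := hnxt1 (f k + 1)
          omega
        have ha : ∀ k, 1 ≤ k → ((R (f k)).1 g l).1 ≤ ((R (f (k+1))).1 g l).1 := by
          intro k _
          exact vmono (f k) (f (k+1)) (hfT1 k) (le_of_lt (hfmono k))
        have hbseq : ∀ k, 1 ≤ k →
            Wop ((R (f k)).1 g l).1 ((Cs (f k) g).getD ⊥) ≤ ((R (f (k+1))).1 g l).1 := by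
          intro k _
          obtain ⟨b, hC, _, _, _, heq⟩ := hfbad k
          rw [hC, Option.getD_some, ← heq]
          exact vmono (f k + 1) (f (k+1)) (by have := hfT1 k; omega) (hfmono k)
        obtain ⟨k₀, hk1, hk2⟩ := hW3 (fun k => ((R (f k)).1 g l).1)
          (fun k => (Cs (f k) g).getD ⊥) ha hbseq
        obtain ⟨b, hC, _, hnb, _, _⟩ := hfbad k₀
        have := hk2 k₀ (le_refl _)
        rw [hC, Option.getD_some] at this
        exact hnb this
      · -- finitely many true widening steps
        obtain ⟨m, hm⟩ := not_forall.mp hfin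
        have hnotbad : ∀ i, m ≤ i → ¬ (∃ b, Cs i g = some b ∧ l = x i ∧
            ¬ b ≤ ((R i).1 g l).1 ∧ ¬ b ≤ (R i).2 g ∧
            ((R (i+1)).1 g l).1 = Wop ((R i).1 g l).1 b) := by
          intro i hi hB
          exact hm ⟨i, hi, hB⟩
        refine ⟨max T1 m, ?_⟩
        intro i hi
        have hi1 : T1 ≤ i := le_trans (le_max_left _ _) hi
        rcases hstepW i hi1 with h | ⟨b, hC, hl, hb, ⟨hr, h⟩ | ⟨hr, h⟩⟩
        · rw [h]
          exact ⟨le_refl _, inv i g l⟩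
        · rw [h]
          exact ⟨le_sup_left, sup_le (inv i g l) hr⟩
        · exact absurd ⟨b, hC, hl, hb, hr, h⟩ (hnotbad i (le_trans (le_max_right _ _) hi))
  -- assemble a uniform threshold
  choose T hT using key
  set Tm := Finset.univ.sup (fun p : G × L => T p.1 p.2) with hTm
  have hTle : ∀ g l, T g l ≤ Tm := by
    intro g l
    rw [hTm]
    exact Finset.le_sup (f := fun p : G × L => T p.1 p.2) (Finset.mem_univ (g, l))
  have star1 : ∀ i, Tm ≤ i → ∀ g l, ((R i).1 g l).1 ≤ ((R (i+1)).1 g l).1 :=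
    fun i hi g l => (hT g l i ((hTle g l).trans hi)).1
  have star2 : ∀ i, Tm ≤ i → ∀ g l, ((R (i+1)).1 g l).1 ≤ (R i).2 g :=
    fun i hi g l => (hT g l i ((hTle g l).trans hi)).2
  have smono : ∀ i, Tm ≤ i → ∀ g, (Finset.univ.sup fun l => ((R i).1 g l).1) ≤
      (Finset.univ.sup fun l => ((R (i+1)).1 g l).1) := by
    intro i hi g
    exact Finset.sup_le fun l _ => (star1 i hi g l).trans (Finset.le_sup (f := fun l => ((R (i+1)).1 g l).1) (Finset.mem_univ l))
  have sbound : ∀ i, Tm ≤ i → ∀ g,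
      (Finset.univ.sup fun l => ((R (i+1)).1 g l).1) ≤ (R i).2 g :=
    fun i hi g => Finset.sup_le fun l _ => star2 i hi g l
  have rho_anti : ∀ i, Tm ≤ i → ∀ g, (R (i+1)).2 g ≤ (R i).2 g := by
    intro i hi g
    cases hC : Cs i g with
    | none => rw [rho_keep i g (em_cs_none i g hC)]
    | some b =>
      by_cases hmut : Mutates gas ((R i).1 g (x i)) b
      · rw [rho_mut i g b hC hmut]
        exact sbound i hi g
      · rw [rho_keep i g (em_not_mut i g b hC hmut)]
  have rho_anti' : ∀ g i i', Tm ≤ i → i ≤ i' → (R i').2 g ≤ (R i).2 g := by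
    intro g i i' hTm' hii'
    induction i' with
    | zero =>
      obtain rfl : i = 0 := by omega
      exact le_refl _
    | succ i' ih =>
      rcases Nat.eq_or_lt_of_le hii' with heq | hlt
      · rw [heq]
      · exact (rho_anti i' (by omega) g).trans (ih (by omega))
  have smono' : ∀ g i i', Tm ≤ i → i ≤ i' →
      (Finset.univ.sup fun l => ((R i).1 g l).1) ≤
        (Finset.univ.sup fun l => ((R i').1 g l).1) := by
    intro g i i' hTm' hii'
    induction i' with
    | zero =>
      obtain rfl : i = 0 := by omega
      exact le_refl _
    | succ i' ih =>
      rcases Nat.eq_or_lt_of_le hii' with heq | hlt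
      · rw [heq]
      · exact (ih (by omega)).trans (smono i' (by omega) g)
  -- after Tm, each global emits at most once
  have once : ∀ g i, Tm ≤ i → emitted Wop Nop gas (R i).2 (x i) (Cs i) (R i).1 g ≠ none →
      ∀ i', i < i' → emitted Wop Nop gas (R i').2 (x i') (Cs i') (R i').1 g = none := by
    intro g i hi hne i' hii'
    obtain ⟨d, hd⟩ := Option.ne_none_iff_exists'.mp hne
    obtain ⟨⟨b, hC, hmut⟩, hdval, hdne⟩ := em_some_inv i g d hd
    by_contra hne'
    obtain ⟨d', hd'⟩ := Option.ne_none_iff_exists'.mp hne'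
    obtain ⟨⟨b', hC', hmut'⟩, hdval', hdne'⟩ := em_some_inv i' g d' hd'
    have h1 : (R (i+1)).2 g = Finset.univ.sup fun l => ((R (i+1)).1 g l).1 :=
      rho_mut i g b hC hmut
    have h2 : (R i').2 g ≤ (R (i+1)).2 g := rho_anti' g (i+1) i' (by omega) (by omega)
    have h3 : (Finset.univ.sup fun l => ((R (i+1)).1 g l).1) ≤
        Finset.univ.sup fun l => ((R (i'+1)).1 g l).1 :=
      smono' g (i+1) (i'+1) (by omega) (by omega)
    have h4 : (Finset.univ.sup fun l => ((R (i'+1)).1 g l).1) ≤ (R i').2 g :=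
      sbound i' (by omega) g
    apply hdne'
    rw [hdval']
    refine le_antisymm h4 ?_
    calc (R i').2 g ≤ (R (i+1)).2 g := h2
      _ = Finset.univ.sup fun l => ((R (i+1)).1 g l).1 := h1
      _ ≤ Finset.univ.sup fun l => ((R (i'+1)).1 g l).1 := h3
  have perg : ∀ g : G, ∃ jg, ∀ i, jg < i →
      emitted Wop Nop gas (R i).2 (x i) (Cs i) (R i).1 g = none := by
    intro g
    rcases Classical.em (∃ i, Tm ≤ i ∧
        emitted Wop Nop gas (R i).2 (x i) (Cs i) (R i).1 g ≠ none) with ⟨i, hi, hne⟩ | hno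
    · exact ⟨i, fun i' hii' => once g i hi hne i' hii'⟩
    · refine ⟨Tm, fun i hi => ?_⟩
      by_contra hne
      exact hno ⟨i, le_of_lt hi, hne⟩
  choose jg hjg using perg
  refine ⟨Finset.univ.sup jg, fun i hi g => ?_⟩
  exact hjg g i (lt_of_le_of_lt (Finset.le_sup (Finset.mem_univ g)) hi)
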